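/- For every n ≥ 1 and d ≥ 1, the Lie algebras 𝔰𝔩_n(ℂ[u^{±1}]⋊Γ) and 𝔰𝔩_{nd}(ℂ[t^{±1}]) are isomorphic as Lie algebras over ℂ, where ℂ[t^{±1}] is the Laurent polynomial ring in one variable. -/

import Mathlib

/-!
STATEMENT 8: For every `n ≥ 1` and `d ≥ 1`, the Lie algebras `𝔰𝔩_n(ℂ[u^{±1}] ⋊ Γ)` and
`𝔰𝔩_{nd}(ℂ[t^{±1}])` are isomorphic as Lie algebras over ℂ.  Here `𝔰𝔩_n(R)` denotes the
derived Lie subalgebra `[𝔤𝔩_n(R), 𝔤𝔩_n(R)]` of the Lie algebra of `n × n` matrices.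
-/

/-- Data exhibiting `A` as the skew group algebra `ℂ[u^{±1}] ⋊ (ℤ/dℤ)`,
where `b j i` represents the basis element `u^j ξ^i`. -/
structure SkewLaurentAlgebra (d : ℕ) (ζ : ℂ) (A : Type) [Ring A] [Algebra ℂ A] where
  b : ℤ → ZMod d → A
  basis : Module.Basis (ℤ × ZMod d) ℂ A
  basis_eq : ∀ (j : ℤ) (i : ZMod d), basis (j, i) = b j i
  b_one : b 0 0 = 1
  b_mul : ∀ (j₁ j₂ : ℤ) (i₁ i₂ : ZMod d),
    b j₁ i₁ * b j₂ i₂ = (ζ ^ ((i₁.val : ℤ) * j₂)) • b (j₁ + j₂) (i₁ + i₂)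

attribute [local instance 100] LieRing.ofAssociativeRing

namespace Stmt8Aux

open Matrix LaurentPolynomial

/-! ### Transport of the derived ideal along a Lie algebra equivalence -/

theorem mem_derived_map {R L L' : Type*} [CommRing R] [LieRing L] [LieAlgebra R L]
    [LieRing L'] [LieAlgebra R L'] (e : L ≃ₗ⁅R⁆ L') {x : L}
    (hx : x ∈ (⁅(⊤ : LieIdeal R L), (⊤ : LieIdeal R L)⁆ : LieIdeal R L)) :
    e x ∈ (⁅(⊤ : LieIdeal R L'), (⊤ : LieIdeal R L')⁆ : LieIdeal R L') := by
  have hsurj : Function.Surjective e.toLieHom := e.surjective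
  have h : LieIdeal.map e.toLieHom ⁅(⊤ : LieIdeal R L), (⊤ : LieIdeal R L)⁆ =
      ⁅(⊤ : LieIdeal R L'), (⊤ : LieIdeal R L')⁆ := by
    rw [LieIdeal.map_bracket_eq _ hsurj, ← LieHom.idealRange_eq_map,
      LieHom.idealRange_eq_top_of_surjective _ hsurj]
  rw [← h]
  exact LieIdeal.mem_map hx

noncomputable def derivedEquiv {R L L' : Type*} [CommRing R] [LieRing L] [LieAlgebra R L]
    [LieRing L'] [LieAlgebra R L'] (e : L ≃ₗ⁅R⁆ L') :
    (⁅(⊤ : LieIdeal R L), (⊤ : LieIdeal R L)⁆ : LieIdeal R L) ≃ₗ⁅R⁆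
      (⁅(⊤ : LieIdeal R L'), (⊤ : LieIdeal R L')⁆ : LieIdeal R L') where
  toFun x := ⟨e x, mem_derived_map e x.2⟩
  map_add' x y := Subtype.ext (e.toLinearEquiv.map_add (x : L) (y : L))
  map_smul' c x := Subtype.ext (e.toLinearEquiv.map_smul c (x : L))
  map_lie' {x y} := Subtype.ext (e.toLieHom.map_lie (x : L) (y : L))
  invFun y := ⟨e.symm y, by
    have := mem_derived_map e.symm y.2
    simpa using this⟩
  left_inv x := Subtype.ext (by simp)
  right_inv y := Subtype.ext (by simp)

/-! ### Integer/root-of-unity toolbox -/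

variable {d : ℕ} {ζ : ℂ}

/-- The residue of `z` modulo `d`, as an element of `Fin d`. -/
def fmod (hd : 0 < d) (z : ℤ) : Fin d :=
  ⟨(z % (d : ℤ)).toNat, by
    have h1 : 0 ≤ z % (d : ℤ) := Int.emod_nonneg z (by exact_mod_cast hd.ne')
    have h2 : z % (d : ℤ) < d := Int.emod_lt_of_pos z (by exact_mod_cast hd)
    omega⟩

lemma fmod_coe (hd : 0 < d) (z : ℤ) : ((fmod hd z : ℕ) : ℤ) = z % d := by
  have h1 : 0 ≤ z % (d : ℤ) := Int.emod_nonneg z (by exact_mod_cast hd.ne')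
  simp only [fmod]
  omega

lemma fmod_congr (hd : 0 < d) {x y : ℤ} (h : (d : ℤ) ∣ (x - y)) : fmod hd x = fmod hd y := by
  have h2 : x % (d : ℤ) = y % d := by
    have := (Int.modEq_iff_dvd.mpr h) -- y ≡ x [ZMOD d]
    exact this.symm
  apply Fin.ext
  simp only [fmod, h2]

lemma zpow_congr (hd : 0 < d) (hζ : IsPrimitiveRoot ζ d) {x y : ℤ}
    (h : (d : ℤ) ∣ x - y) : ζ ^ x = ζ ^ y := by
  have hne : ζ ≠ 0 := hζ.ne_zero hd.ne'
  have h1 : ζ ^ (x - y) = 1 := (hζ.zpow_eq_one_iff_dvd _).mpr h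
  calc ζ ^ x = ζ ^ (y + (x - y)) := by rw [show y + (x - y) = x by ring]
    _ = ζ ^ y * ζ ^ (x - y) := zpow_add₀ hne _ _
    _ = ζ ^ y := by rw [h1, mul_one]

lemma sum_zpow (hd : 0 < d) (hζ : IsPrimitiveRoot ζ d) (r : ℤ) :
    ∑ k ∈ Finset.range d, ζ ^ (r * (k : ℤ)) = if (d : ℤ) ∣ r then (d : ℂ) else 0 := by
  have hne : ζ ≠ 0 := hζ.ne_zero hd.ne'
  have key : ∀ k : ℕ, ζ ^ (r * (k : ℤ)) = (ζ ^ r) ^ k := fun k => by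
    rw [_root_.zpow_mul, zpow_natCast]
  by_cases h : (d : ℤ) ∣ r
  · have h1 : ζ ^ r = 1 := (hζ.zpow_eq_one_iff_dvd r).mpr h
    simp [key, h1, h]
  · have h1 : ζ ^ r ≠ 1 := fun c => h ((hζ.zpow_eq_one_iff_dvd r).mp c)
    have hzd : (ζ ^ r) ^ d = 1 := by
      rw [← zpow_natCast (ζ ^ r) d, ← _root_.zpow_mul, mul_comm, _root_.zpow_mul, zpow_natCast,
        hζ.pow_eq_one, _root_.one_zpow]
    simp only [key]
    rw [geom_sum_eq h1 d, hzd]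
    simp [h]

lemma sum_zpow_fin (hd : 0 < d) (hζ : IsPrimitiveRoot ζ d) (r : ℤ) :
    ∑ k : Fin d, ζ ^ (r * ((k : ℕ) : ℤ)) = if (d : ℤ) ∣ r then (d : ℂ) else 0 := by
  rw [Fin.sum_univ_eq_sum_range (fun k : ℕ => ζ ^ (r * (k : ℤ))), sum_zpow hd hζ]

lemma dvd_iff_eq {x y : ℕ} (hx : x < d) (hy : y < d) :
    (d : ℤ) ∣ ((x : ℤ) - y) ↔ x = y := by
  constructor
  · intro h
    have habs : |(x : ℤ) - y| < d := by
      rw [abs_lt]; omega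
    have := Int.eq_zero_of_abs_lt_dvd h habs
    omega
  · rintro rfl; simp

/-! ### The skew group algebra is a matrix algebra over Laurent polynomials -/

variable {A : Type} [Ring A] [Algebra ℂ A]

local notation "LL" => LaurentPolynomial ℂ

variable (hd : 0 < d) (S : SkewLaurentAlgebra d ζ A)

lemma b_mul_zero (x y : ℤ) : S.b x 0 * S.b y 0 = S.b (x + y) 0 := by
  rw [S.b_mul]
  simp [ZMod.val_zero]

lemma b_zero_mul (x : ℤ) (i : ZMod d) : S.b x 0 * S.b 0 i = S.b x i := by
  rw [S.b_mul]
  simp [ZMod.val_zero]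

/-- The image of the basis vector `u^j ξ^i` in the matrix algebra. -/
noncomputable def gmat (hd : 0 < d) (ζ : ℂ) (j : ℤ) (i : ZMod d) : Matrix (Fin d) (Fin d) LL :=
  ∑ k : Fin d, ζ ^ ((i.val : ℤ) * ((k : ℕ) : ℤ)) •
    Matrix.single (fmod hd (j + (k : ℕ))) k (T ((j + ((k : ℕ) : ℤ)) / d))

lemma gmat_mul (hζ : IsPrimitiveRoot ζ d) (j₁ j₂ : ℤ) (i₁ i₂ : ZMod d) :
    gmat hd ζ j₁ i₁ * gmat hd ζ j₂ i₂ =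
      ζ ^ ((i₁.val : ℤ) * j₂) • gmat hd ζ (j₁ + j₂) (i₁ + i₂) := by
  haveI : NeZero d := ⟨hd.ne'⟩
  have hne : ζ ≠ 0 := hζ.ne_zero hd.ne'
  have hdz : (d : ℤ) ≠ 0 := by exact_mod_cast hd.ne'
  unfold gmat
  rw [Finset.sum_mul_sum, Finset.smul_sum, Finset.sum_comm]
  refine Finset.sum_congr rfl (fun l _ => ?_)
  rw [Finset.sum_eq_single (fmod hd (j₂ + (l : ℕ)))]
  · set k₀ : Fin d := fmod hd (j₂ + (l : ℕ)) with hk₀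
    set x : ℤ := j₂ + ((l : ℕ) : ℤ) with hx
    have hk : ((k₀ : ℕ) : ℤ) = x % d := fmod_coe hd x
    have hxdm : (d : ℤ) * (x / d) + x % d = x := Int.mul_ediv_add_emod x d
    rw [smul_mul_smul_comm, single_mul_single_same, ← T_add, smul_smul]
    have hidx : fmod hd (j₁ + ((k₀ : ℕ) : ℤ)) = fmod hd (j₁ + j₂ + (l : ℕ)) := by
      apply fmod_congr hd
      refine ⟨-(x / d), ?_⟩
      rw [hk]
      push_cast
      linarith
    have hexp : (j₁ + ((k₀ : ℕ) : ℤ)) / d + x / d = (j₁ + j₂ + ((l : ℕ) : ℤ)) / d := by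
      rw [hk, show j₁ + j₂ + ((l : ℕ) : ℤ) = (j₁ + x % d) + (d : ℤ) * (x / d) by push_cast; linarith,
        Int.add_mul_ediv_left _ _ hdz]
    have hcoef : ζ ^ ((i₁.val : ℤ) * ((k₀ : ℕ) : ℤ)) * ζ ^ ((i₂.val : ℤ) * ((l : ℕ) : ℤ)) =
        ζ ^ ((i₁.val : ℤ) * j₂) * ζ ^ (((i₁ + i₂).val : ℤ) * ((l : ℕ) : ℤ)) := by
      rw [← zpow_add₀ hne, ← zpow_add₀ hne]
      apply zpow_congr hd hζ
      have h1 : (d : ℤ) ∣ ((k₀ : ℕ) : ℤ) - x := ⟨-(x / d), by rw [hk]; linarith⟩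
      have h2 : (d : ℤ) ∣ ((i₁.val : ℤ) + (i₂.val : ℤ)) - ((i₁ + i₂).val : ℤ) := by
        refine ⟨((i₁.val : ℤ) + (i₂.val : ℤ)) / d, ?_⟩
        have hv : ((i₁ + i₂).val : ℤ) = ((i₁.val : ℤ) + (i₂.val : ℤ)) % d := by
          rw [ZMod.val_add]; push_cast; ring
        rw [hv]
        linarith [Int.mul_ediv_add_emod ((i₁.val : ℤ) + (i₂.val : ℤ)) (d : ℤ)]
      obtain ⟨w1, hw1⟩ := h1
      obtain ⟨w2, hw2⟩ := h2
      refine ⟨(i₁.val : ℤ) * w1 + w2 * ((l : ℕ) : ℤ), ?_⟩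
      have hx' : ((k₀ : ℕ) : ℤ) = x + (d : ℤ) * w1 := by linarith
      have hv' : ((i₁ + i₂).val : ℤ) = (i₁.val : ℤ) + (i₂.val : ℤ) - (d : ℤ) * w2 := by linarith
      rw [hx', hv', hx]
      ring
    rw [hidx, hexp, hcoef]
  · intro k _ hkne
    rw [smul_mul_smul_comm, single_mul_single_of_ne _ _ _ _ hkne, smul_zero]
  · intro h
    exact absurd (Finset.mem_univ _) h

lemma gmat_one : gmat hd ζ 0 (0 : ZMod d) = 1 := by
  haveI : NeZero d := ⟨hd.ne'⟩
  unfold gmat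
  have h1 : ∀ k : Fin d, fmod hd (0 + (k : ℕ)) = k := by
    intro k
    apply Fin.ext
    have : ((0 : ℤ) + (k : ℕ)) % d = ((k : ℕ) : ℤ) := by
      rw [zero_add]
      exact Int.emod_eq_of_lt (by positivity) (by exact_mod_cast k.2)
    simp only [fmod, this]
    omega
  have h2 : ∀ k : Fin d, ((0 : ℤ) + ((k : ℕ) : ℤ)) / d = 0 := by
    intro k
    rw [zero_add]
    exact Int.ediv_eq_zero_of_lt (by positivity) (by exact_mod_cast k.2)
  calc (∑ k : Fin d, ζ ^ (((0 : ZMod d).val : ℤ) * ((k : ℕ) : ℤ)) •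
      Matrix.single (fmod hd (0 + (k : ℕ))) k (T (((0 : ℤ) + ((k : ℕ) : ℤ)) / d)))
      = ∑ k : Fin d, Matrix.single k k (1 : LL) := by
        refine Finset.sum_congr rfl (fun k _ => ?_)
        rw [h1, h2, ZMod.val_zero, T_zero]
        norm_num
    _ = 1 := by
        refine Matrix.ext fun a c => ?_
        rw [Matrix.sum_apply]
        by_cases h : a = c
        · subst h
          rw [Matrix.one_apply_eq]
          rw [Finset.sum_eq_single a]
          · exact single_apply_same a a 1
          · intro k _ hk
            exact single_apply_of_ne _ _ _ _ _ (by tauto)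
          · intro h; exact absurd (Finset.mem_univ _) h
        · rw [Matrix.one_apply_ne h]
          refine Finset.sum_eq_zero (fun k _ => ?_)
          apply single_apply_of_ne
          rintro ⟨rfl, rfl⟩
          exact h rfl

/-- The structural linear map `A →ₗ[ℂ] M_d(ℂ[t,t⁻¹])`. -/
noncomputable def chi (hd : 0 < d) (S : SkewLaurentAlgebra d ζ A) :
    A →ₗ[ℂ] Matrix (Fin d) (Fin d) LL :=
  S.basis.constr ℂ fun p => gmat hd ζ p.1 p.2

lemma chi_b (j : ℤ) (i : ZMod d) : chi hd S (S.b j i) = gmat hd ζ j i := by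
  rw [← S.basis_eq]
  exact S.basis.constr_basis ℂ _ (j, i)

lemma chi_mul (hζ : IsPrimitiveRoot ζ d) (x y : A) : chi hd S (x * y) = chi hd S x * chi hd S y := by
  have hbasis : ∀ p q : ℤ × ZMod d,
      chi hd S (S.basis p * S.basis q) = chi hd S (S.basis p) * chi hd S (S.basis q) := by
    intro p q
    rw [S.basis_eq, S.basis_eq, S.b_mul, LinearMap.map_smul, chi_b, chi_b, chi_b, gmat_mul hd hζ]
  have h1 : ∀ q : ℤ × ZMod d,
      (chi hd S).comp (LinearMap.mulRight ℂ (S.basis q)) =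
        (LinearMap.mulRight ℂ (chi hd S (S.basis q))).comp (chi hd S) := fun q =>
    S.basis.ext fun p => by simpa using hbasis p q
  have h2 : ∀ x : A, (chi hd S).comp (LinearMap.mulLeft ℂ x) =
      (LinearMap.mulLeft ℂ (chi hd S x)).comp (chi hd S) := fun x =>
    S.basis.ext fun q => by simpa using LinearMap.congr_fun (h1 q) x
  simpa using LinearMap.congr_fun (h2 x) y

/-- The structural algebra map `A →ₐ[ℂ] M_d(ℂ[t,t⁻¹])`. -/
noncomputable def chiA (hζ : IsPrimitiveRoot ζ d) : A →ₐ[ℂ] Matrix (Fin d) (Fin d) LL :=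
  AlgHom.ofLinearMap (chi hd S)
    (by rw [show (1 : A) = S.b 0 0 from S.b_one.symm, chi_b, gmat_one hd])
    (chi_mul hd S hζ)

lemma chiA_apply (hζ : IsPrimitiveRoot ζ d) (x : A) : chiA hd S hζ x = chi hd S x := rfl

/-! ### The inverse linear map -/

/-- Lift of Laurent polynomials into `A`, sending `T^m` to `u^{dm}`. -/
noncomputable def tau (S : SkewLaurentAlgebra d ζ A) : LL →ₗ[ℂ] A :=
  (Finsupp.linearCombination ℂ (fun m : ℤ => S.b ((d : ℤ) * m) 0)).comp
    (AddMonoidAlgebra.coeffLinearEquiv ℂ).toLinearMap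

lemma tau_T (m : ℤ) : tau S (T m) = S.b ((d : ℤ) * m) 0 := by
  show Finsupp.linearCombination ℂ (fun m : ℤ => S.b ((d : ℤ) * m) 0) (Finsupp.single m (1 : ℂ)) = _
  rw [Finsupp.linearCombination_single, one_smul]

/-- The idempotent `e_k` in `A`. -/
noncomputable def ebas (S : SkewLaurentAlgebra d ζ A) (ζ : ℂ) (k : Fin d) : A :=
  (d : ℂ)⁻¹ • ∑ i : Fin d, ζ ^ (-(((k : ℕ) : ℤ) * ((i : ℕ) : ℤ))) • S.b 0 (((i : ℕ) : ZMod d))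

/-- The inverse linear map `M_d(ℂ[t,t⁻¹]) →ₗ[ℂ] A`. -/
noncomputable def phi (S : SkewLaurentAlgebra d ζ A) (ζ : ℂ) :
    Matrix (Fin d) (Fin d) LL →ₗ[ℂ] A where
  toFun X := ∑ a : Fin d, ∑ c : Fin d,
    S.b (((a : ℕ) : ℤ) - ((c : ℕ) : ℤ)) 0 * tau S (X a c) * ebas S ζ c
  map_add' X Y := by
    rw [← Finset.sum_add_distrib]
    refine Finset.sum_congr rfl fun a _ => ?_
    rw [← Finset.sum_add_distrib]
    refine Finset.sum_congr rfl fun c _ => ?_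
    rw [Matrix.add_apply, map_add, mul_add, add_mul]
  map_smul' r X := by
    simp only [RingHom.id_apply, Matrix.smul_apply, LinearMap.map_smul, mul_smul_comm,
      smul_mul_assoc, Finset.smul_sum]

lemma phi_std (a c : Fin d) (p : LL) :
    phi S ζ (Matrix.single a c p) =
      S.b (((a : ℕ) : ℤ) - ((c : ℕ) : ℤ)) 0 * tau S p * ebas S ζ c := by
  unfold phi
  simp only [LinearMap.coe_mk, AddHom.coe_mk]
  rw [Finset.sum_eq_single a]
  · rw [Finset.sum_eq_single c]
    · rw [single_apply_same]
    · intro c' _ hc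
      rw [single_apply_of_ne _ _ _ _ _ (by tauto), map_zero, mul_zero, zero_mul]
    · intro h; exact absurd (Finset.mem_univ _) h
  · intro a' _ ha
    refine Finset.sum_eq_zero fun c' _ => ?_
    rw [single_apply_of_ne _ _ _ _ _ (by tauto), map_zero, mul_zero, zero_mul]
  · intro h; exact absurd (Finset.mem_univ _) h

lemma phi_gmat (hζ : IsPrimitiveRoot ζ d) (j : ℤ) (i : ZMod d) :
    phi S ζ (gmat hd ζ j i) = S.b j i := by
  haveI : NeZero d := ⟨hd.ne'⟩
  have hne : ζ ≠ 0 := hζ.ne_zero hd.ne'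
  have hdC : (d : ℂ) ≠ 0 := by exact_mod_cast hd.ne'
  unfold gmat
  rw [map_sum]
  have step1 : ∀ k : Fin d,
      phi S ζ (ζ ^ ((i.val : ℤ) * ((k : ℕ) : ℤ)) •
          Matrix.single (fmod hd (j + (k : ℕ))) k (T ((j + ((k : ℕ) : ℤ)) / d)))
        = (d : ℂ)⁻¹ • ∑ i' : Fin d,
            (ζ ^ (((i.val : ℤ) - ((i' : ℕ) : ℤ)) * ((k : ℕ) : ℤ))) • S.b j (((i' : ℕ) : ZMod d)) := by
    intro k
    rw [LinearMap.map_smul, phi_std, tau_T, b_mul_zero]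
    have hJ : ((fmod hd (j + (k : ℕ)) : ℕ) : ℤ) - ((k : ℕ) : ℤ) +
        (d : ℤ) * ((j + ((k : ℕ) : ℤ)) / d) = j := by
      rw [fmod_coe]
      linarith [Int.mul_ediv_add_emod (j + ((k : ℕ) : ℤ)) (d : ℤ)]
    rw [hJ]
    unfold ebas
    rw [mul_smul_comm, smul_comm (ζ ^ ((i.val : ℤ) * ((k : ℕ) : ℤ))), Finset.mul_sum,
      Finset.smul_sum]
    refine congrArg _ (Finset.sum_congr rfl fun i' _ => ?_)
    rw [mul_smul_comm, b_zero_mul, smul_smul, ← zpow_add₀ hne,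
      show (i.val : ℤ) * ((k : ℕ) : ℤ) + -(((k : ℕ) : ℤ) * ((i' : ℕ) : ℤ)) =
        ((i.val : ℤ) - ((i' : ℕ) : ℤ)) * ((k : ℕ) : ℤ) by ring]
  rw [Finset.sum_congr rfl fun k _ => step1 k, ← Finset.smul_sum, Finset.sum_comm]
  have step2 : ∀ i' : Fin d,
      (∑ k : Fin d, (ζ ^ (((i.val : ℤ) - ((i' : ℕ) : ℤ)) * ((k : ℕ) : ℤ))) •
          S.b j (((i' : ℕ) : ZMod d)))
        = (if (d : ℤ) ∣ ((i.val : ℤ) - ((i' : ℕ) : ℤ)) then (d : ℂ) else 0) •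
            S.b j (((i' : ℕ) : ZMod d)) := by
    intro i'
    rw [← Finset.sum_smul, sum_zpow_fin hd hζ]
  rw [Finset.sum_congr rfl fun i' _ => step2 i']
  rw [Finset.sum_eq_single (⟨i.val, ZMod.val_lt i⟩ : Fin d)]
  · have hcond : (d : ℤ) ∣ ((i.val : ℤ) - ((i.val : ℕ) : ℤ)) := by simp
    rw [if_pos hcond, smul_smul, inv_mul_cancel₀ hdC, one_smul]
    congr 1
    show ((i.val : ℕ) : ZMod d) = i
    rw [ZMod.natCast_val, ZMod.cast_id]
  · intro i' _ hne'
    rw [if_neg, zero_smul]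
    intro hdvd
    have : i.val = (i' : ℕ) := (dvd_iff_eq (ZMod.val_lt i) i'.2).mp hdvd
    exact hne' (Fin.ext this.symm)
  · intro h; exact absurd (Finset.mem_univ _) h

lemma chi_phi_T (a c : Fin d) (m : ℤ) (hζ : IsPrimitiveRoot ζ d) :
    chi hd S (phi S ζ (Matrix.single a c (T m))) = Matrix.single a c (T m) := by
  haveI : NeZero d := ⟨hd.ne'⟩
  have hne : ζ ≠ 0 := hζ.ne_zero hd.ne'
  have hdC : (d : ℂ) ≠ 0 := by exact_mod_cast hd.ne'
  have hdz : (d : ℤ) ≠ 0 := by exact_mod_cast hd.ne'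
  rw [phi_std, tau_T, b_mul_zero]
  set J : ℤ := ((a : ℕ) : ℤ) - ((c : ℕ) : ℤ) + (d : ℤ) * m with hJdef
  unfold ebas
  rw [mul_smul_comm, Finset.mul_sum, LinearMap.map_smul, map_sum]
  have step1 : ∀ i' : Fin d,
      chi hd S (S.b J 0 * (ζ ^ (-(((c : ℕ) : ℤ) * ((i' : ℕ) : ℤ))) • S.b 0 (((i' : ℕ) : ZMod d))))
        = ∑ k : Fin d, (ζ ^ (-(((c : ℕ) : ℤ) * ((i' : ℕ) : ℤ)) +
            ((i' : ℕ) : ℤ) * ((k : ℕ) : ℤ))) •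
            Matrix.single (fmod hd (J + (k : ℕ))) k ((T ((J + ((k : ℕ) : ℤ)) / d)) : LL) := by
    intro i'
    rw [mul_smul_comm, b_zero_mul, LinearMap.map_smul, chi_b]
    unfold gmat
    rw [Finset.smul_sum]
    refine Finset.sum_congr rfl fun k _ => ?_
    rw [smul_smul, ← zpow_add₀ hne]
    congr 2
    rw [ZMod.val_cast_of_lt i'.2]
  rw [Finset.sum_congr rfl fun i' _ => step1 i', Finset.sum_comm]
  have step2 : ∀ k : Fin d,
      (∑ i' : Fin d, (ζ ^ (-(((c : ℕ) : ℤ) * ((i' : ℕ) : ℤ)) +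
          ((i' : ℕ) : ℤ) * ((k : ℕ) : ℤ))) •
          Matrix.single (fmod hd (J + (k : ℕ))) k ((T ((J + ((k : ℕ) : ℤ)) / d)) : LL))
        = (if (d : ℤ) ∣ (((k : ℕ) : ℤ) - ((c : ℕ) : ℤ)) then (d : ℂ) else 0) •
            Matrix.single (fmod hd (J + (k : ℕ))) k ((T ((J + ((k : ℕ) : ℤ)) / d)) : LL) := by
    intro k
    rw [← Finset.sum_smul, ← sum_zpow_fin hd hζ ((((k : ℕ) : ℤ) - ((c : ℕ) : ℤ)))]
    congr 1
    refine Finset.sum_congr rfl fun i' _ => ?_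
    congr 1
    ring
  rw [Finset.sum_congr rfl fun k _ => step2 k]
  rw [Finset.sum_eq_single c]
  · rw [if_pos (by simp), smul_smul, inv_mul_cancel₀ hdC, one_smul]
    have hJc : J + ((c : ℕ) : ℤ) = ((a : ℕ) : ℤ) + (d : ℤ) * m := by rw [hJdef]; ring
    have hfm : fmod hd (J + (c : ℕ)) = a := by
      apply Fin.ext
      have h1 : (J + ((c : ℕ) : ℤ)) % d = ((a : ℕ) : ℤ) := by
        rw [hJc, Int.add_mul_emod_self_left]
        exact Int.emod_eq_of_lt (by positivity) (by exact_mod_cast a.2)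
      simp only [fmod, h1]
      omega
    have hdiv : (J + ((c : ℕ) : ℤ)) / d = m := by
      rw [hJc, Int.add_mul_ediv_left _ _ hdz,
        Int.ediv_eq_zero_of_lt (by positivity) (by exact_mod_cast a.2), zero_add]
    rw [hfm, hdiv]
  · intro k _ hkc
    rw [if_neg, zero_smul]
    intro hdvd
    exact hkc (Fin.ext ((dvd_iff_eq k.2 c.2).mp hdvd))
  · intro h; exact absurd (Finset.mem_univ _) h

/-- `A` is isomorphic to `M_d(ℂ[t,t⁻¹])` as a `ℂ`-algebra. -/
noncomputable def isoAM (hζ : IsPrimitiveRoot ζ d) : A ≃ₐ[ℂ] Matrix (Fin d) (Fin d) LL := by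
  refine AlgEquiv.ofBijective (chiA hd S hζ) ⟨?_, ?_⟩
  · have hleft : (phi S ζ).comp (chi hd S) = LinearMap.id := by
      refine S.basis.ext fun p => ?_
      rw [LinearMap.comp_apply, LinearMap.id_apply]
      have hp : S.basis p = S.b p.1 p.2 := S.basis_eq p.1 p.2
      rw [hp, chi_b, phi_gmat hd S hζ]
    intro x y hxy
    have h1 : ∀ z : A, phi S ζ (chi hd S z) = z := fun z => LinearMap.congr_fun hleft z
    have h2 := congrArg (phi S ζ) hxy
    rwa [chiA_apply, chiA_apply, h1, h1] at h2
  · intro X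
    have hmem : ∀ (a c : Fin d) (p : LL),
        Matrix.single a c p ∈ LinearMap.range (chi hd S) := by
      intro a c p
      induction p using LaurentPolynomial.induction_on' with
      | add p q hp hq => rw [Matrix.single_add]; exact add_mem hp hq
      | C_mul_T m cc =>
        have h1 : (C cc * T m : LL) = cc • (T m : LL) := by
          rw [← single_eq_C_mul_T]
          show _ = cc • (AddMonoidAlgebra.single m (1 : ℂ) : LL)
          rw [AddMonoidAlgebra.smul_single', mul_one]
        rw [h1, ← Matrix.smul_single]
        exact Submodule.smul_mem _ _
          ⟨phi S ζ (Matrix.single a c (T m)), chi_phi_T hd S a c m hζ⟩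
    have hX : X ∈ LinearMap.range (chi hd S) := by
      have hsum : (∑ a : Fin d, ∑ c : Fin d, Matrix.single a c (X a c))
          ∈ LinearMap.range (chi hd S) :=
        Submodule.sum_mem _ fun a _ => Submodule.sum_mem _ fun c _ => hmem a c _
      rwa [← matrix_eq_sum_single X] at hsum
    obtain ⟨y, hy⟩ := hX
    exact ⟨y, by rw [chiA_apply]; exact hy⟩

end Stmt8Aux

theorem stmt_8 (d : ℕ) (hd : 0 < d) (ζ : ℂ) (hζ : IsPrimitiveRoot ζ d)
    (A : Type) [Ring A] [Algebra ℂ A] (S : SkewLaurentAlgebra d ζ A)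
    (n : ℕ) (hn : 1 ≤ n) :
    Nonempty
      ((⁅(⊤ : LieIdeal ℂ (Matrix (Fin n) (Fin n) A)),
          (⊤ : LieIdeal ℂ (Matrix (Fin n) (Fin n) A))⁆ :
          LieIdeal ℂ (Matrix (Fin n) (Fin n) A))
        ≃ₗ⁅ℂ⁆
        (⁅(⊤ : LieIdeal ℂ (Matrix (Fin (n * d)) (Fin (n * d)) (LaurentPolynomial ℂ))),
          (⊤ : LieIdeal ℂ (Matrix (Fin (n * d)) (Fin (n * d)) (LaurentPolynomial ℂ)))⁆ :
          LieIdeal ℂ (Matrix (Fin (n * d)) (Fin (n * d)) (LaurentPolynomial ℂ)))) := by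
  classical
  let E : Matrix (Fin n) (Fin n) A ≃ₐ[ℂ] Matrix (Fin (n * d)) (Fin (n * d)) (LaurentPolynomial ℂ) :=
    ((Stmt8Aux.isoAM hd S hζ).mapMatrix.trans
      (Matrix.compAlgEquiv (Fin n) (Fin d) (LaurentPolynomial ℂ) ℂ)).trans
      (Matrix.reindexAlgEquiv ℂ (LaurentPolynomial ℂ) finProdFinEquiv)
  exact ⟨Stmt8Aux.derivedEquiv E.toLieEquiv⟩
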